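/- arXiv:1512.03719 — 8 statements merged into one kernel-verified Lean document; each statement's English description precedes it below -/
import Mathlib

section
/- If real numbers a, b satisfy 0 < a ≤ b ≤ √2·a, then there exist positive real numbers x, y with a = (x+y)/2 and b = √(xy) + |x−y|/2. -/
theorem exists_pair_arith_reverse_geom (a b : ℝ) (ha : 0 < a) (hab : a ≤ b)
    (hb : b ≤ Real.sqrt 2 * a) :
    ∃ x y : ℝ, 0 < x ∧ 0 < y ∧ a = (x + y) / 2 ∧
      b = Real.sqrt (x * y) + |x - y| / 2 := by
  have h2 : (Real.sqrt 2) ^ 2 = 2 := Real.sq_sqrt (by norm_num)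
  have hsq2lt : Real.sqrt 2 < 2 := by
    nlinarith [Real.sqrt_nonneg 2]
  have hb2 : b ^ 2 ≤ 2 * a ^ 2 := by
    nlinarith [Real.sqrt_nonneg 2]
  set s := Real.sqrt (2 * a ^ 2 - b ^ 2) with hs
  have hsnn : 0 ≤ s := Real.sqrt_nonneg _
  have hs2 : s ^ 2 = 2 * a ^ 2 - b ^ 2 := Real.sq_sqrt (by linarith)
  have hsb : s ≤ b := by
    nlinarith [hs2, hsnn]
  set d := (b - s) / 2 with hd
  have hdnn : 0 ≤ d := by simp [hd]; linarith
  have hdlt : d < a := by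
    have : b - s < 2 * a := by nlinarith
    simp only [hd]; linarith
  refine ⟨a + d, a - d, by linarith, by linarith, by ring, ?_⟩
  have hxy : (a + d) * (a - d) = ((b + s) / 2) ^ 2 := by
    simp only [hd]; nlinarith [hs2]
  rw [hxy, Real.sqrt_sq (by linarith)]
  have habs : |a + d - (a - d)| = 2 * d := by
    rw [abs_of_nonneg (by linarith)]; ring
  rw [habs]
  simp only [hd]; ring
end

section
/- If 0 < a ≤ b ≤ √2·a, then the quadratic equation 2x² + 2(b−2a)x + (b−a)² = 0 has a positive real solution x with x ≤ a. -/
theorem quadratic_has_positive_solution (a b : ℝ) (ha : 0 < a) (hab : a ≤ b)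
    (hb : b ≤ Real.sqrt 2 * a) :
    ∃ x : ℝ, 0 < x ∧ x ≤ a ∧ 2 * x ^ 2 + 2 * (b - 2 * a) * x + (b - a) ^ 2 = 0 := by
  set s := Real.sqrt (2 * a ^ 2 - b ^ 2) with hs
  have hd : 0 ≤ 2 * a ^ 2 - b ^ 2 := by
    have h2 : Real.sqrt 2 * a ≤ Real.sqrt 2 * a := le_refl _
    have hb2 : b ^ 2 ≤ (Real.sqrt 2 * a) ^ 2 := by
      apply pow_le_pow_left₀ (by linarith) hb
    have : (Real.sqrt 2 * a) ^ 2 = 2 * a ^ 2 := by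
      rw [mul_pow, Real.sq_sqrt (by norm_num : (2:ℝ) ≥ 0)]
    linarith
  have hs0 : 0 ≤ s := Real.sqrt_nonneg _
  have hssq : s ^ 2 = 2 * a ^ 2 - b ^ 2 := Real.sq_sqrt hd
  have hsb : s ≤ b := by
    have : s ^ 2 ≤ b ^ 2 := by nlinarith
    nlinarith
  have h2ab : b < 2 * a := by
    have hs2 : Real.sqrt 2 < 2 := by
      have := Real.sq_sqrt (by norm_num : (2:ℝ) ≥ 0)
      nlinarith [Real.sqrt_nonneg 2]
    nlinarith
  refine ⟨(2 * a - b + s) / 2, by linarith, by linarith, ?_⟩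
  field_simp
  nlinarith [hssq]
end

section
/- For the 2×2 orthogonal projections P = [[1,0],[0,0]] and Q_θ = [[cos²θ, cosθ sinθ],[cosθ sinθ, sin²θ]], if a real number α satisfies (1−α)(P+Q_θ) ≤ |P−Q_θ| in the Loewner order for all θ in some punctured neighborhood of 0, then α ≥ 1. -/
open scoped ComplexOrder

/-- Matrix absolute value via functional calculus: `|X| = (XᴴX)^{1/2}` for Hermitian `X`. -/
noncomputable def matAbs {𝕜 : Type*} [RCLike 𝕜] {m : Type*} [Fintype m] [DecidableEq m]
    (X : Matrix m m 𝕜) : Matrix m m 𝕜 :=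
  cfc (fun t : ℝ => |t|) X

/-- Matrix square root via functional calculus. -/
noncomputable def matSqrt {𝕜 : Type*} [RCLike 𝕜] {m : Type*} [Fintype m] [DecidableEq m]
    (X : Matrix m m 𝕜) : Matrix m m 𝕜 :=
  cfc Real.sqrt X

/-- Matrix geometric mean `A # B = A^{1/2} (A^{-1/2} B A^{-1/2})^{1/2} A^{1/2}`. -/
noncomputable def geomMean {𝕜 : Type*} [RCLike 𝕜] {m : Type*} [Fintype m] [DecidableEq m]
    (A B : Matrix m m 𝕜) : Matrix m m 𝕜 :=
  matSqrt A * matSqrt ((matSqrt A)⁻¹ * B * (matSqrt A)⁻¹) * matSqrt A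

/-- Loewner order: `A ≤ B` iff `B - A` is positive semidefinite. -/
def loewnerLE {𝕜 : Type*} [RCLike 𝕜] {m : Type*} [Fintype m] [DecidableEq m]
    (A B : Matrix m m 𝕜) : Prop :=
  (B - A).PosSemidef

/-- If a selfadjoint matrix squares to `s^2 • 1`, its real spectrum has absolute value `|s|`. -/
lemma abs_spec {X : Matrix (Fin 2) (Fin 2) ℂ} {s : ℝ}
    (hX2 : X * X = ((s^2 : ℝ) : ℂ) • 1) {t : ℝ} (ht : t ∈ spectrum ℝ X) : |t| = |s| := by
  have h2 : t ^ 2 = s ^ 2 := by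
    by_contra hne
    rw [spectrum.mem_iff] at ht
    apply ht
    have hkey : (algebraMap ℝ (Matrix (Fin 2) (Fin 2) ℂ) t - X) *
        (algebraMap ℝ (Matrix (Fin 2) (Fin 2) ℂ) t + X) = ((t^2 - s^2 : ℝ) : ℂ) • 1 := by
      rw [Algebra.algebraMap_eq_smul_one]
      rw [sub_mul, mul_add, mul_add, smul_mul_assoc, one_mul, smul_mul_assoc, one_mul,
        mul_smul_comm, mul_one, hX2]
      match_scalars <;> simp only [Complex.coe_algebraMap] <;> push_cast <;> ring
    have hunit : IsUnit ((algebraMap ℝ (Matrix (Fin 2) (Fin 2) ℂ) t - X) *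
        (algebraMap ℝ (Matrix (Fin 2) (Fin 2) ℂ) t + X)) := by
      rw [hkey]
      have h0 : ((t : ℂ))^2 - (s : ℂ)^2 ≠ 0 := by
        simpa [sub_eq_zero] using fun hc => hne (by exact_mod_cast hc)
      refine (Matrix.isUnit_iff_isUnit_det _).mpr ?_
      simp only [Matrix.det_smul, Matrix.det_one, isUnit_iff_ne_zero]
      push_cast
      simp [pow_eq_zero_iff, h0]
    rw [Matrix.isUnit_iff_isUnit_det, Matrix.det_mul, IsUnit.mul_iff] at hunit
    exact (Matrix.isUnit_iff_isUnit_det _).mpr hunit.1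
  calc |t| = Real.sqrt (t ^ 2) := (Real.sqrt_sq_eq_abs t).symm
    _ = Real.sqrt (s ^ 2) := by rw [h2]
    _ = |s| := Real.sqrt_sq_eq_abs s

lemma matAbs_eq {X : Matrix (Fin 2) (Fin 2) ℂ} {s : ℝ} (hsa : IsSelfAdjoint X)
    (hX2 : X * X = ((s^2 : ℝ) : ℂ) • 1) :
    matAbs X = ((|s| : ℝ) : ℂ) • 1 := by
  unfold matAbs
  rw [cfc_congr (g := fun _ : ℝ => |s|) (fun t ht => abs_spec hX2 ht),
    cfc_const |s| X hsa, Algebra.algebraMap_eq_smul_one]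
  norm_num [Complex.coe_smul]

theorem alpha_ge_one_of_loewner_near_zero (α : ℝ)
    (h : ∃ δ > (0 : ℝ), ∀ θ : ℝ, θ ≠ 0 → |θ| < δ →
      loewnerLE
        (((1 - α : ℝ) : ℂ) •
          ((!![1, 0; 0, 0] : Matrix (Fin 2) (Fin 2) ℂ) +
            !![((Real.cos θ ^ 2 : ℝ) : ℂ), ((Real.cos θ * Real.sin θ : ℝ) : ℂ);
               ((Real.cos θ * Real.sin θ : ℝ) : ℂ), ((Real.sin θ ^ 2 : ℝ) : ℂ)]))
        (matAbs
          ((!![1, 0; 0, 0] : Matrix (Fin 2) (Fin 2) ℂ) -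
            !![((Real.cos θ ^ 2 : ℝ) : ℂ), ((Real.cos θ * Real.sin θ : ℝ) : ℂ);
               ((Real.cos θ * Real.sin θ : ℝ) : ℂ), ((Real.sin θ ^ 2 : ℝ) : ℂ)]))) :
    1 ≤ α := by
  by_contra hlt
  push_neg at hlt
  have hε : 0 < 1 - α := by linarith
  obtain ⟨δ, hδ, hall⟩ := h
  set θ : ℝ := min δ (1 - α) / 2 with hθdef
  have hθ0 : 0 < θ := by positivity
  have hθδ : |θ| < δ := by
    rw [abs_of_pos hθ0]
    have := min_le_left δ (1 - α)
    linarith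
  have hθε : θ < 1 - α := by
    have := min_le_right δ (1 - α)
    linarith
  have hPQ := hall θ (ne_of_gt hθ0) hθδ
  set c := Real.cos θ
  set s := Real.sin θ
  set X : Matrix (Fin 2) (Fin 2) ℂ :=
    (!![1, 0; 0, 0] : Matrix (Fin 2) (Fin 2) ℂ) -
      !![((c ^ 2 : ℝ) : ℂ), ((c * s : ℝ) : ℂ); ((c * s : ℝ) : ℂ), ((s ^ 2 : ℝ) : ℂ)]
    with hXdef
  have hcs : c ^ 2 + s ^ 2 = 1 := by
    exact Real.cos_sq_add_sin_sq θ
  have hX2 : X * X = ((s ^ 2 : ℝ) : ℂ) • 1 := by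
    have hcsC : (c : ℂ) ^ 2 + (s : ℂ) ^ 2 = 1 := by exact_mod_cast hcs
    ext i j
    fin_cases i <;> fin_cases j <;>
      simp [hXdef, Matrix.mul_apply, Fin.sum_univ_two, Matrix.smul_apply, Matrix.one_apply] <;>
      push_cast <;>
      first
        | linear_combination ((c : ℂ) ^ 2 - 1) * hcsC
        | linear_combination ((c : ℂ) * s) * hcsC
        | linear_combination (-(c : ℂ) * s) * hcsC
        | linear_combination ((s : ℂ) ^ 2) * hcsC
        | linear_combination (-(s : ℂ) ^ 2) * hcsC
  have hsa : IsSelfAdjoint X := by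
    rw [IsSelfAdjoint, Matrix.star_eq_conjTranspose]
    ext i j
    fin_cases i <;> fin_cases j <;>
      simp [hXdef, Matrix.conjTranspose_apply, Complex.star_def, Complex.conj_ofReal]
  have habs : matAbs X = ((|s| : ℝ) : ℂ) • 1 := matAbs_eq hsa hX2
  rw [loewnerLE, habs] at hPQ
  have key := hPQ.dotProduct_mulVec_nonneg ![1, 0]
  simp [Matrix.mulVec, dotProduct, Fin.sum_univ_two, Matrix.smul_apply,
    Matrix.one_apply, Matrix.sub_apply, Matrix.add_apply] at key
  rw [Complex.le_def] at key
  obtain ⟨key1, -⟩ := key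
  push_cast at key1
  simp [Complex.sub_re, Complex.mul_re, Complex.add_re, ← Complex.ofReal_pow,
    Complex.ofReal_re, Complex.ofReal_im] at key1
  have hs_le : |s| ≤ θ := by
    have := Real.abs_sin_le_abs (x := θ)
    rwa [abs_of_pos hθ0] at this
  nlinarith [sq_nonneg c, key1, hs_le, hθε, hε, mul_nonneg hε.le (sq_nonneg c)]
end

section
/- For every positive definite matrix A with I ≤ A ≤ √2·I, there exist positive definite matrices X, Y with (X+Y)/2 = I and A = X # Y + (1/2) X^{1/2} |I − X^{-1/2} Y X^{-1/2}| X^{1/2}. -/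
open scoped ComplexOrder

section Aux

open Matrix

/-- Helper scalar function. -/
noncomputable def tf (x : ℝ) : ℝ := (x - Real.sqrt (2 - x ^ 2)) / 2

/-- `1 + tf`. -/
noncomputable def gf (x : ℝ) : ℝ := 1 + tf x

/-- `1 - tf`. -/
noncomputable def hf (x : ℝ) : ℝ := 1 - tf x

lemma tf_facts {x : ℝ} (h1 : 1 ≤ x) (h2 : x ≤ Real.sqrt 2) :
    0 ≤ tf x ∧ tf x < 1 ∧ Real.sqrt ((1 + tf x) * (1 - tf x)) = x - tf x := by
  have hsq2 : Real.sqrt 2 ^ 2 = 2 := Real.sq_sqrt (by norm_num)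
  have hsq2' : Real.sqrt 2 < 2 := by nlinarith [Real.sqrt_nonneg 2]
  have hx0 : (0:ℝ) < x := lt_of_lt_of_le one_pos h1
  have hx2 : x ^ 2 ≤ 2 := by nlinarith [Real.sqrt_nonneg 2]
  set s := Real.sqrt (2 - x ^ 2) with hs
  have hs0 : 0 ≤ s := Real.sqrt_nonneg _
  have hs2 : s ^ 2 = 2 - x ^ 2 := Real.sq_sqrt (by linarith)
  have hsx : s ≤ x := by nlinarith
  have htf : tf x = (x - s) / 2 := rfl
  have ht0 : 0 ≤ tf x := by rw [htf]; linarith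
  have ht1 : tf x < 1 := by rw [htf]; linarith
  refine ⟨ht0, ht1, ?_⟩
  have key : (1 + tf x) * (1 - tf x) = (x - tf x) ^ 2 := by
    rw [htf]; linear_combination ((-1:ℝ)/2) * hs2
  rw [key, Real.sqrt_sq (by rw [htf]; linarith)]

lemma tf_cont : Continuous tf := by
  unfold tf; fun_prop

lemma gf_cont : Continuous gf := by
  unfold gf; exact continuous_const.add tf_cont

lemma hf_cont : Continuous hf := by
  unfold hf; exact continuous_const.sub tf_cont

lemma spectrum_bounds {n : ℕ} {A : Matrix (Fin n) (Fin n) ℂ} (hherm : A.IsHermitian)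
    (h1 : (A - 1).PosSemidef) (h2 : ((((Real.sqrt 2 : ℝ)) : ℂ) • 1 - A).PosSemidef) :
    ∀ x ∈ spectrum ℝ A, 1 ≤ x ∧ x ≤ Real.sqrt 2 := by
  intro x hx
  rw [hherm.spectrum_real_eq_range_eigenvalues] at hx
  obtain ⟨i, rfl⟩ := hx
  set v : Fin n → ℂ := ⇑(hherm.eigenvectorBasis i) with hv
  have hvv : (dotProduct (star v) v : ℂ) = 1 := by
    have hnorm := hherm.eigenvectorBasis.orthonormal.1 i
    have hinner : (inner (𝕜 := ℂ) (hherm.eigenvectorBasis i) (hherm.eigenvectorBasis i)) = (1:ℂ) := by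
      rw [inner_self_eq_norm_sq_to_K, hnorm]; norm_num
    rw [EuclideanSpace.inner_eq_star_dotProduct, dotProduct_comm] at hinner
    exact hinner
  have heig := hherm.eigenvalues_eq i
  constructor
  · have hnn := h1.re_dotProduct_nonneg v
    have expand : dotProduct (star v) ((A - 1) *ᵥ v)
        = dotProduct (star v) (A *ᵥ v) - 1 := by
      rw [Matrix.sub_mulVec, dotProduct_sub, Matrix.one_mulVec, hvv]
    rw [expand, map_sub] at hnn
    rw [heig]
    simpa using hnn
  · have hnn := h2.re_dotProduct_nonneg v
    have expand : dotProduct (star v) (((((Real.sqrt 2 : ℝ)) : ℂ) • 1 - A) *ᵥ v)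
        = (((Real.sqrt 2 : ℝ)) : ℂ) - dotProduct (star v) (A *ᵥ v) := by
      rw [Matrix.sub_mulVec, dotProduct_sub, Matrix.smul_mulVec,
        Matrix.one_mulVec, dotProduct_smul, hvv, smul_eq_mul, mul_one]
    rw [expand, map_sub] at hnn
    rw [heig]
    simpa using hnn

lemma cfc_posDef {n : ℕ} {A : Matrix (Fin n) (Fin n) ℂ} (hherm : A.IsHermitian)
    (f : ℝ → ℝ) (hfc : ContinuousOn f (spectrum ℝ A)) (hfp : ∀ x ∈ spectrum ℝ A, 0 < f x) :
    (cfc f A).PosDef := by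
  have hsa : IsSelfAdjoint A := hherm.isSelfAdjoint
  have hpsd : (cfc f A).PosSemidef := by
    rw [hherm.cfc_eq f]
    unfold Matrix.IsHermitian.cfc
    rw [Unitary.conjStarAlgAut_apply, Matrix.star_eq_conjTranspose]
    refine Matrix.PosSemidef.mul_mul_conjTranspose_same ?_ _
    refine Matrix.posSemidef_diagonal_iff.mpr fun i => ?_
    have := (hfp _ (hherm.eigenvalues_mem_spectrum_real i)).le
    simpa using this
  have hinvc : ContinuousOn (fun x => (f x)⁻¹) (spectrum ℝ A) :=
    hfc.inv₀ fun x hx => (hfp x hx).ne'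
  have hmul : cfc (fun x => (f x)⁻¹) A * cfc f A = 1 := by
    rw [← cfc_mul _ _ A hinvc hfc]
    have he : cfc (fun x => (f x)⁻¹ * f x) A = cfc (fun _ => (1:ℝ)) A :=
      cfc_congr fun x hx => inv_mul_cancel₀ (hfp x hx).ne'
    rw [he, cfc_const_one ℝ A]
  refine posDef_iff_dotProduct_mulVec.mpr ⟨hpsd.1, fun v hv => ?_⟩
  refine lt_of_le_of_ne ((posSemidef_iff_dotProduct_mulVec.mp hpsd).2 v) fun hcon => hv ?_
  have h0 : cfc f A *ᵥ v = 0 := (hpsd.dotProduct_mulVec_zero_iff v).mp hcon.symm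
  calc v = 1 *ᵥ v := (Matrix.one_mulVec v).symm
    _ = (cfc (fun x => (f x)⁻¹) A * cfc f A) *ᵥ v := by rw [hmul]
    _ = cfc (fun x => (f x)⁻¹) A *ᵥ (cfc f A *ᵥ v) := (Matrix.mulVec_mulVec ..).symm
    _ = 0 := by rw [h0, Matrix.mulVec_zero]

end Aux

theorem exists_XY_reverse_rep_one {n : ℕ} (A : Matrix (Fin n) (Fin n) ℂ) (hA : A.PosDef)
    (h1 : loewnerLE 1 A) (h2 : loewnerLE A (((Real.sqrt 2 : ℝ) : ℂ) • 1)) :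
    ∃ X Y : Matrix (Fin n) (Fin n) ℂ, X.PosDef ∧ Y.PosDef ∧
      (1 / 2 : ℂ) • (X + Y) = 1 ∧
      A = geomMean X Y +
        (1 / 2 : ℂ) •
          (matSqrt X * matAbs (1 - (matSqrt X)⁻¹ * Y * (matSqrt X)⁻¹) * matSqrt X) := by
  classical
  have hherm : A.IsHermitian := hA.1
  have hsa : IsSelfAdjoint A := hherm.isSelfAdjoint
  have h1' : (A - 1).PosSemidef := h1
  have h2' : ((((Real.sqrt 2 : ℝ)) : ℂ) • 1 - A).PosSemidef := h2
  have hb := spectrum_bounds hherm h1' h2'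
  -- pointwise facts on the spectrum
  have ht0 : ∀ x ∈ spectrum ℝ A, 0 ≤ tf x := fun x hx => (tf_facts (hb x hx).1 (hb x hx).2).1
  have ht1 : ∀ x ∈ spectrum ℝ A, tf x < 1 := fun x hx => (tf_facts (hb x hx).1 (hb x hx).2).2.1
  have hkey : ∀ x ∈ spectrum ℝ A, Real.sqrt ((1 + tf x) * (1 - tf x)) = x - tf x :=
    fun x hx => (tf_facts (hb x hx).1 (hb x hx).2).2.2
  have hgpos : ∀ x ∈ spectrum ℝ A, 0 < gf x := by
    intro x hx; unfold gf; linarith [ht0 x hx]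
  have hhpos : ∀ x ∈ spectrum ℝ A, 0 < hf x := by
    intro x hx; unfold hf; linarith [ht1 x hx]
  -- continuity facts
  have hsgc : Continuous (fun x => Real.sqrt (gf x)) := Real.continuous_sqrt.comp gf_cont
  have hisgc : ContinuousOn (fun x => (Real.sqrt (gf x))⁻¹) (spectrum ℝ A) :=
    hsgc.continuousOn.inv₀ fun x hx => (Real.sqrt_pos.mpr (hgpos x hx)).ne'
  have hqc : ContinuousOn (fun x => hf x / gf x) (spectrum ℝ A) :=
    hf_cont.continuousOn.div gf_cont.continuousOn fun x hx => (hgpos x hx).ne'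
  have hsqqc : ContinuousOn (fun x => Real.sqrt (hf x / gf x)) (spectrum ℝ A) :=
    Real.continuous_sqrt.comp_continuousOn hqc
  have habsc : ContinuousOn (fun x => |1 - hf x / gf x|) (spectrum ℝ A) :=
    continuous_abs.comp_continuousOn (continuousOn_const.sub hqc)
  -- key rewrites
  have hX : matSqrt (cfc gf A) = cfc (fun x => Real.sqrt (gf x)) A := by
    unfold matSqrt
    rw [← cfc_comp' Real.sqrt gf A Real.continuous_sqrt.continuousOn gf_cont.continuousOn]
  have hXinv : (cfc (fun x => Real.sqrt (gf x)) A)⁻¹ = cfc (fun x => (Real.sqrt (gf x))⁻¹) A := by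
    apply Matrix.inv_eq_right_inv
    rw [← cfc_mul _ _ A hsgc.continuousOn hisgc]
    have he : cfc (fun x => Real.sqrt (gf x) * (Real.sqrt (gf x))⁻¹) A
        = cfc (fun _ => (1:ℝ)) A :=
      cfc_congr fun x hx => mul_inv_cancel₀ (Real.sqrt_pos.mpr (hgpos x hx)).ne'
    rw [he, cfc_const_one ℝ A]
  have hIn : (cfc (fun x => Real.sqrt (gf x)) A)⁻¹ * cfc hf A
        * (cfc (fun x => Real.sqrt (gf x)) A)⁻¹ = cfc (fun x => hf x / gf x) A := by
    rw [hXinv, ← cfc_mul _ _ A hisgc hf_cont.continuousOn,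
      ← cfc_mul (fun x => (Real.sqrt (gf x))⁻¹ * hf x) _ A (hisgc.mul hf_cont.continuousOn) hisgc]
    refine cfc_congr fun x hx => ?_
    have hgx := hgpos x hx
    have hr : Real.sqrt (gf x) * Real.sqrt (gf x) = gf x := Real.mul_self_sqrt hgx.le
    show (Real.sqrt (gf x))⁻¹ * hf x * (Real.sqrt (gf x))⁻¹ = hf x / gf x
    conv_rhs => rw [div_eq_mul_inv, ← hr, mul_inv]
    ring
  have hGeo : geomMean (cfc gf A) (cfc hf A) = cfc (fun x => x - tf x) A := by
    unfold geomMean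
    rw [hX, hIn]
    unfold matSqrt
    rw [← cfc_comp' Real.sqrt (fun x => hf x / gf x) A Real.continuous_sqrt.continuousOn hqc,
      ← cfc_mul _ _ A hsgc.continuousOn hsqqc,
      ← cfc_mul (fun x => Real.sqrt (gf x) * Real.sqrt (hf x / gf x)) _ A (hsgc.continuousOn.mul hsqqc) hsgc.continuousOn]
    refine cfc_congr fun x hx => ?_
    have hgx := hgpos x hx
    have hhx := hhpos x hx
    have hsg : 0 < Real.sqrt (gf x) := Real.sqrt_pos.mpr hgx
    show Real.sqrt (gf x) * Real.sqrt (hf x / gf x) * Real.sqrt (gf x) = x - tf x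
    rw [Real.sqrt_div hhx.le]
    have e1 : Real.sqrt (gf x) * (Real.sqrt (hf x) / Real.sqrt (gf x)) * Real.sqrt (gf x)
        = Real.sqrt (hf x) * Real.sqrt (gf x) := by
      field_simp
    rw [e1, ← Real.sqrt_mul hhx.le, ← hkey x hx]
    congr 1
    unfold hf gf
    ring
  have h1cfc : (1 : Matrix (Fin n) (Fin n) ℂ) - cfc (fun x => hf x / gf x) A
      = cfc (fun x => 1 - hf x / gf x) A := by
    rw [cfc_sub (fun _ => (1:ℝ)) (fun x => hf x / gf x) A continuousOn_const hqc,
      cfc_const_one ℝ A]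
  have hAbs : matAbs ((1 : Matrix (Fin n) (Fin n) ℂ) - cfc (fun x => hf x / gf x) A)
      = cfc (fun x => |1 - hf x / gf x|) A := by
    rw [h1cfc]
    unfold matAbs
    rw [← cfc_comp' (fun t : ℝ => |t|) (fun x => 1 - hf x / gf x) A
      continuous_abs.continuousOn (continuousOn_const.sub hqc)]
  have hCorr : matSqrt (cfc gf A) *
        matAbs (1 - (matSqrt (cfc gf A))⁻¹ * cfc hf A * (matSqrt (cfc gf A))⁻¹) *
        matSqrt (cfc gf A) = cfc (fun x => 2 * tf x) A := by
    rw [hX, hIn, hAbs,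
      ← cfc_mul _ _ A hsgc.continuousOn habsc,
      ← cfc_mul (fun x => Real.sqrt (gf x) * |1 - hf x / gf x|) _ A (hsgc.continuousOn.mul habsc) hsgc.continuousOn]
    refine cfc_congr fun x hx => ?_
    have hgx := hgpos x hx
    have hr : Real.sqrt (gf x) * Real.sqrt (gf x) = gf x := Real.mul_self_sqrt hgx.le
    have hle : hf x / gf x ≤ 1 := by
      rw [div_le_one hgx]
      unfold hf gf
      linarith [ht0 x hx]
    have habs : |1 - hf x / gf x| = 1 - hf x / gf x := abs_of_nonneg (by linarith)
    show Real.sqrt (gf x) * |1 - hf x / gf x| * Real.sqrt (gf x) = 2 * tf x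
    rw [habs]
    have e2 : Real.sqrt (gf x) * (1 - hf x / gf x) * Real.sqrt (gf x)
        = (Real.sqrt (gf x) * Real.sqrt (gf x)) * (1 - hf x / gf x) := by ring
    rw [e2, hr]
    field_simp
    unfold hf gf
    ring
  have hsmul : ∀ M : Matrix (Fin n) (Fin n) ℂ, (1 / 2 : ℂ) • M = (1 / 2 : ℝ) • M := by
    intro M
    rw [← algebraMap_smul ℂ (1/2 : ℝ) M]
    norm_num
  refine ⟨cfc gf A, cfc hf A, ?_, ?_, ?_, ?_⟩
  · exact cfc_posDef hherm gf gf_cont.continuousOn hgpos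
  · exact cfc_posDef hherm hf hf_cont.continuousOn hhpos
  · rw [← cfc_add A gf hf gf_cont.continuousOn hf_cont.continuousOn]
    have he : cfc (fun x => gf x + hf x) A = cfc (fun _ => (2:ℝ)) A := by
      refine cfc_congr fun x _ => ?_
      unfold gf hf; ring
    rw [he, cfc_const (2:ℝ) A, Algebra.algebraMap_eq_smul_one,
      ← algebraMap_smul ℂ (2:ℝ) (1 : Matrix (Fin n) (Fin n) ℂ), map_ofNat, smul_smul]
    norm_num
  · rw [hGeo, hCorr, hsmul]
    rw [← cfc_const_mul (1/2 : ℝ) (fun x => 2 * tf x) A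
      (continuous_const.mul tf_cont).continuousOn]
    have he : cfc (fun x => (1/2 : ℝ) * (2 * tf x)) A = cfc tf A := by
      refine cfc_congr fun x _ => ?_
      ring
    rw [he, ← cfc_add A (fun x => x - tf x) tf
      (continuous_id.sub tf_cont).continuousOn tf_cont.continuousOn]
    have he2 : cfc (fun x => (x - tf x) + tf x) A = cfc (fun x : ℝ => x) A := by
      refine cfc_congr fun x _ => ?_
      ring
    rw [he2, cfc_id' ℝ A]
end

section
/- If X₀, Y₀ are positive semidefinite matrices with X₀ ≤ I ≤ Y₀ and X₀ + Y₀ = 2I, and A is positive definite, then A − A^{1/2} X₀ A^{1/2} = (1/2)(A^{1/2} X₀ A^{1/2})^{1/2} · |(A^{1/2} X₀ A^{1/2})^{-1/2} (A^{1/2} Y₀ A^{1/2}) (A^{1/2} X₀ A^{1/2})^{-1/2} − I| · (A^{1/2} X₀ A^{1/2})^{1/2}. -/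
open scoped ComplexOrder

lemma spectrum_nonneg_of_psd {n : ℕ} {P : Matrix (Fin n) (Fin n) ℂ}
    (hP : P.PosSemidef) {x : ℝ} (hx : x ∈ spectrum ℝ P) : 0 ≤ x := by
  rw [hP.1.spectrum_real_eq_range_eigenvalues] at hx
  obtain ⟨i, rfl⟩ := hx
  exact hP.eigenvalues_nonneg i

lemma matSqrt_mul_self {n : ℕ} {P : Matrix (Fin n) (Fin n) ℂ} (hP : P.PosSemidef) :
    matSqrt P * matSqrt P = P := by
  rw [matSqrt, ← cfc_mul Real.sqrt Real.sqrt P]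
  rw [cfc_congr (g := fun x : ℝ => x)
    (fun x hx => Real.mul_self_sqrt (spectrum_nonneg_of_psd hP hx))]
  exact cfc_id' ℝ P hP.isHermitian

lemma matAbs_of_psd {n : ℕ} {P : Matrix (Fin n) (Fin n) ℂ} (hP : P.PosSemidef) :
    matAbs P = P := by
  rw [matAbs]
  rw [cfc_congr (g := fun x : ℝ => x)
    (fun x hx => abs_of_nonneg (spectrum_nonneg_of_psd hP hx))]
  exact cfc_id' ℝ P hP.isHermitian

theorem sub_eq_half_abs_conj {n : ℕ} (A X₀ Y₀ : Matrix (Fin n) (Fin n) ℂ)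
    (hA : A.PosDef) (hX₀ : X₀.PosDef) (hY₀ : Y₀.PosSemidef)
    (hX₀le : loewnerLE X₀ 1) (hY₀ge : loewnerLE 1 Y₀) (hsum : X₀ + Y₀ = 2) :
    A - matSqrt A * X₀ * matSqrt A =
      (1 / 2 : ℂ) •
        (matSqrt (matSqrt A * X₀ * matSqrt A) *
          matAbs
            ((matSqrt (matSqrt A * X₀ * matSqrt A))⁻¹ *
                (matSqrt A * Y₀ * matSqrt A) *
                  (matSqrt (matSqrt A * X₀ * matSqrt A))⁻¹ - 1) *
          matSqrt (matSqrt A * X₀ * matSqrt A)) := by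
  set S := matSqrt A with hSdef
  have hShe : S.IsHermitian := cfc_predicate Real.sqrt A
  have hSS : S * S = A := matSqrt_mul_self hA.posSemidef
  set M := S * X₀ * S with hMdef
  have hMpsd : M.PosSemidef := by
    have := hX₀.posSemidef.conjTranspose_mul_mul_same S
    rwa [hShe.eq] at this
  set N := S * Y₀ * S with hNdef
  -- determinant facts
  have hdetS : S.det ≠ 0 := by
    have : S.det * S.det = A.det := by rw [← Matrix.det_mul, hSS]
    intro h
    rw [h, mul_zero] at this
    exact hA.det_pos.ne' this.symm
  have hdetM : M.det ≠ 0 := by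
    simp only [hMdef, Matrix.det_mul]
    exact mul_ne_zero (mul_ne_zero hdetS hX₀.det_pos.ne') hdetS
  set R := matSqrt M with hRdef
  have hRhe : R.IsHermitian := cfc_predicate Real.sqrt M
  have hRR : R * R = M := matSqrt_mul_self hMpsd
  have hdetR : R.det ≠ 0 := by
    have : R.det * R.det = M.det := by rw [← Matrix.det_mul, hRR]
    intro h
    rw [h, mul_zero] at this
    exact hdetM this.symm
  have hRinv : R * R⁻¹ = 1 := Matrix.mul_nonsing_inv R hdetR.isUnit
  have hinvR : R⁻¹ * R = 1 := Matrix.nonsing_inv_mul R hdetR.isUnit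
  have hinvHe : (R⁻¹).conjTranspose = R⁻¹ := by
    rw [Matrix.conjTranspose_nonsing_inv, hRhe.eq]
  -- N - M is positive semidefinite
  have hYX : (Y₀ - X₀).PosSemidef := by
    have := hY₀ge.add hX₀le
    rwa [sub_add_sub_cancel] at this
  have hNM : (N - M).PosSemidef := by
    have h1 : N - M = S.conjTranspose * (Y₀ - X₀) * S := by
      rw [hShe.eq, hNdef, hMdef, Matrix.mul_sub, Matrix.sub_mul]
    rw [h1]
    exact hYX.conjTranspose_mul_mul_same S
  -- the matrix inside the absolute value
  have hQeq : R⁻¹ * N * R⁻¹ - 1 = R⁻¹ * (N - M) * R⁻¹ := by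
    have hMinv : R⁻¹ * M * R⁻¹ = 1 := by
      rw [← hRR, show R⁻¹ * (R * R) * R⁻¹ = (R⁻¹ * R) * (R * R⁻¹) by noncomm_ring,
        hinvR, hRinv, one_mul]
    rw [Matrix.mul_sub, Matrix.sub_mul, hMinv]
  have hQpsd : (R⁻¹ * N * R⁻¹ - 1).PosSemidef := by
    rw [hQeq]
    nth_rewrite 1 [← hinvHe]
    exact hNM.conjTranspose_mul_mul_same R⁻¹
  rw [matAbs_of_psd hQpsd, hQeq,
    show R * (R⁻¹ * (N - M) * R⁻¹) * R = (R * R⁻¹) * (N - M) * (R⁻¹ * R) by noncomm_ring,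
    hRinv, hinvR, one_mul, mul_one]
  -- final algebraic identity
  have hplus : N + M = A + A := by
    have : S * (Y₀ + X₀) * S = S * (2 : Matrix (Fin n) (Fin n) ℂ) * S := by
      rw [add_comm Y₀ X₀, hsum]
    rw [hNdef, hMdef, ← Matrix.add_mul, ← Matrix.mul_add, this, mul_two,
      Matrix.add_mul, hSS]
  have hNval : N = A + A - M := by rw [← hplus]; abel
  rw [hNval]
  module
end

section
/- If A, B are positive definite matrices with I ≤ A^{-1/2} B A^{-1/2}, then there exist positive definite matrices Z₁ = I ≤ Z₂ ≤ ⋯ ≤ Z_k = A^{-1/2} B A^{-1/2} with Zᵢ ≤ Zᵢ₊₁ ≤ √2·Zᵢ for all i; consequently the chain Cᵢ = A^{1/2} Zᵢ A^{1/2} satisfies A = C₁ ≤ C₂ ≤ ⋯ ≤ C_k = B and Cᵢ ≤ Cᵢ₊₁ ≤ √2·Cᵢ. -/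
open scoped ComplexOrder

section Aux

lemma contOn_of_finite {f : ℝ → ℝ} {s : Set ℝ} (hs : s.Finite) : ContinuousOn f s := by
  rw [continuousOn_iff_continuous_restrict]
  have := hs.to_subtype
  exact continuous_of_discreteTopology

lemma cfc_sub_posSemidef {n : ℕ} {M : Matrix (Fin n) (Fin n) ℂ} (hM : M.IsHermitian)
    {f g : ℝ → ℝ} (hfg : ∀ x ∈ spectrum ℝ M, f x ≤ g x) :
    (cfc g M - cfc f M).PosSemidef := by
  rw [hM.cfc_eq g, hM.cfc_eq f]
  unfold Matrix.IsHermitian.cfc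
  have key : (hM.eigenvectorUnitary : Matrix (Fin n) (Fin n) ℂ) *
      Matrix.diagonal (RCLike.ofReal ∘ g ∘ hM.eigenvalues) *
      star (hM.eigenvectorUnitary : Matrix (Fin n) (Fin n) ℂ) -
      (hM.eigenvectorUnitary : Matrix (Fin n) (Fin n) ℂ) *
      Matrix.diagonal (RCLike.ofReal ∘ f ∘ hM.eigenvalues) *
      star (hM.eigenvectorUnitary : Matrix (Fin n) (Fin n) ℂ) =
      (hM.eigenvectorUnitary : Matrix (Fin n) (Fin n) ℂ) *
      (Matrix.diagonal (RCLike.ofReal ∘ g ∘ hM.eigenvalues) -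
        Matrix.diagonal (RCLike.ofReal ∘ f ∘ hM.eigenvalues)) *
      star (hM.eigenvectorUnitary : Matrix (Fin n) (Fin n) ℂ) := by
    rw [Matrix.mul_sub, Matrix.sub_mul]
  rw [Unitary.conjStarAlgAut_apply, Unitary.conjStarAlgAut_apply, key, Matrix.diagonal_sub, Matrix.star_eq_conjTranspose]
  refine Matrix.PosSemidef.mul_mul_conjTranspose_same ?_ _
  refine Matrix.PosSemidef.diagonal ?_
  intro i
  simp only [Pi.sub_apply, Function.comp_apply, Pi.zero_apply, ← RCLike.ofReal_sub]
  rw [RCLike.ofReal_nonneg]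
  have : hM.eigenvalues i ∈ spectrum ℝ M := by
    rw [hM.spectrum_real_eq_range_eigenvalues]; exact ⟨i, rfl⟩
  linarith [hfg _ this]

end Aux

theorem exists_sqrt_two_matrix_chain {n : ℕ} (A B : Matrix (Fin n) (Fin n) ℂ)
    (hA : A.PosDef) (hB : B.PosDef)
    (h : loewnerLE 1 ((matSqrt A)⁻¹ * B * (matSqrt A)⁻¹)) :
    ∃ (k : ℕ) (Z : ℕ → Matrix (Fin n) (Fin n) ℂ), 1 ≤ k ∧
      (∀ i, 1 ≤ i → i ≤ k → (Z i).PosDef) ∧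
      Z 1 = 1 ∧ Z k = (matSqrt A)⁻¹ * B * (matSqrt A)⁻¹ ∧
      (∀ i, 1 ≤ i → i < k →
        loewnerLE (Z i) (Z (i + 1)) ∧
          loewnerLE (Z (i + 1)) (((Real.sqrt 2 : ℝ) : ℂ) • Z i)) ∧
      matSqrt A * Z 1 * matSqrt A = A ∧ matSqrt A * Z k * matSqrt A = B ∧
      (∀ i, 1 ≤ i → i < k →
        loewnerLE (matSqrt A * Z i * matSqrt A) (matSqrt A * Z (i + 1) * matSqrt A) ∧
          loewnerLE (matSqrt A * Z (i + 1) * matSqrt A)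
            (((Real.sqrt 2 : ℝ) : ℂ) • (matSqrt A * Z i * matSqrt A))) := by
  classical
  set S : Matrix (Fin n) (Fin n) ℂ := matSqrt A with hSdef
  set M : Matrix (Fin n) (Fin n) ℂ := S⁻¹ * B * S⁻¹ with hMdef
  have hM1 : (M - 1).PosSemidef := h
  have hMpd : M.PosDef := by
    have h2 := Matrix.PosDef.add_posSemidef Matrix.PosDef.one hM1
    have h3 : (1 : Matrix (Fin n) (Fin n) ℂ) + (M - 1) = M := by abel
    rwa [h3] at h2
  have hM : M.IsHermitian := hMpd.isHermitian
  have hsa : IsSelfAdjoint M := hM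
  have hfin : (spectrum ℝ M).Finite := Matrix.finite_real_spectrum
  have hcont : ∀ f : ℝ → ℝ, ContinuousOn f (spectrum ℝ M) := fun f => contOn_of_finite hfin
  -- lower bound on the spectrum of `M`
  have hspec1 : ∀ x ∈ spectrum ℝ M, (1:ℝ) ≤ x := by
    intro x hx
    have hmem : x - 1 ∈ spectrum ℝ (M - 1) := by
      have hset := spectrum.sub_singleton_eq (R := ℝ) M 1
      rw [map_one] at hset
      rw [← hset]
      exact Set.sub_mem_sub hx rfl
    rw [Matrix.IsHermitian.spectrum_real_eq_range_eigenvalues hM1.1] at hmem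
    obtain ⟨i, hi⟩ := hmem
    have hnn := hM1.eigenvalues_nonneg i
    rw [hi] at hnn
    linarith
  -- upper bound on the spectrum of `M`
  obtain ⟨T, hT⟩ := hfin.bddAbove
  have hsq2 : (1:ℝ) < Real.sqrt 2 := by
    rw [show (1:ℝ) = Real.sqrt 1 from (Real.sqrt_one).symm]
    exact Real.sqrt_lt_sqrt (by norm_num) (by norm_num)
  obtain ⟨m₀, hm₀⟩ := pow_unbounded_of_one_lt T hsq2
  set m : ℕ := max m₀ 1 with hmdef
  have hm1 : 1 ≤ m := le_max_right _ _
  have hm0 : (m:ℝ) ≠ 0 := by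
    have : (0:ℝ) < m := by exact_mod_cast hm1.trans_lt' Nat.zero_lt_one
    exact this.ne'
  have hTm : T ≤ Real.sqrt 2 ^ m :=
    le_trans hm₀.le (pow_le_pow_right₀ hsq2.le (le_max_left _ _))
  have hspecT : ∀ x ∈ spectrum ℝ M, x ≤ Real.sqrt 2 ^ m := fun x hx => (hT hx).trans hTm
  -- the chain
  set e : ℕ → ℝ := fun i => ((i - 1 : ℕ) : ℝ) / m with hedef
  set Z : ℕ → Matrix (Fin n) (Fin n) ℂ :=
    fun i => cfc (fun x : ℝ => x ^ e i) M with hZdef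
  have he0 : ∀ i, 0 ≤ e i := fun i => by
    rw [hedef]
    positivity
  have hestep : ∀ i, 1 ≤ i → e (i + 1) = e i + 1 / m := by
    intro i hi
    simp only [hedef]
    rw [Nat.add_sub_cancel, ← add_div, Nat.cast_sub hi]
    norm_num
  have hZ1 : Z 1 = 1 := by
    have he1 : e 1 = 0 := by simp [hedef]
    have hfun : (fun x : ℝ => x ^ e 1) = fun _ : ℝ => (1:ℝ) := by
      funext x; rw [he1, Real.rpow_zero]
    rw [hZdef]
    simp only [hfun]
    rw [cfc_const 1 M hsa, map_one]
  have hZk : Z (m + 1) = M := by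
    have he1 : e (m + 1) = 1 := by
      simp only [hedef, Nat.add_sub_cancel]
      exact div_self hm0
    have hfun : (fun x : ℝ => x ^ e (m + 1)) = fun x : ℝ => x := by
      funext x; rw [he1, Real.rpow_one]
    rw [hZdef]
    simp only [hfun]
    exact cfc_id' ℝ M hsa
  have hone_le : ∀ i, ∀ x ∈ spectrum ℝ M, (1:ℝ) ≤ x ^ e i := by
    intro i x hx
    have := Real.rpow_le_rpow_of_exponent_le (hspec1 x hx) (he0 i)
    rwa [Real.rpow_zero] at this
  have hZpd : ∀ i, (Z i).PosDef := by
    intro i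
    have hsub : (Z i - 1).PosSemidef := by
      have hkey := cfc_sub_posSemidef hM (f := fun _ : ℝ => (1:ℝ))
        (g := fun x : ℝ => x ^ e i) (fun x hx => hone_le i x hx)
      rwa [cfc_const 1 M hsa, map_one] at hkey
    have h2 := Matrix.PosDef.add_posSemidef Matrix.PosDef.one hsub
    have h3 : (1 : Matrix (Fin n) (Fin n) ℂ) + (Z i - 1) = Z i := by abel
    rwa [h3] at h2
  have hmono : ∀ i, 1 ≤ i → loewnerLE (Z i) (Z (i + 1)) := by
    intro i hi
    refine cfc_sub_posSemidef hM (fun x hx => ?_)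
    refine Real.rpow_le_rpow_of_exponent_le (hspec1 x hx) ?_
    rw [hestep i hi]
    have : (0:ℝ) ≤ 1 / m := by positivity
    linarith
  have hsmul : ∀ i, ((Real.sqrt 2 : ℝ) : ℂ) • Z i
      = cfc (fun x : ℝ => Real.sqrt 2 * x ^ e i) M := by
    intro i
    have h1 : ((Real.sqrt 2 : ℝ) : ℂ) • Z i = (Real.sqrt 2 : ℝ) • Z i := by
      ext a b
      simp [Complex.real_smul]
    have h2 := cfc_smul (Real.sqrt 2) (fun x : ℝ => x ^ e i) M (hcont _)
    rw [h1, ← h2]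
    simp [smul_eq_mul]
  have hstep2 : ∀ i, 1 ≤ i →
      loewnerLE (Z (i + 1)) (((Real.sqrt 2 : ℝ) : ℂ) • Z i) := by
    intro i hi
    show ((((Real.sqrt 2 : ℝ) : ℂ) • Z i) - Z (i + 1)).PosSemidef
    rw [hsmul i]
    refine cfc_sub_posSemidef hM (fun x hx => ?_)
    have hx1 := hspec1 x hx
    have hx0 : (0:ℝ) < x := lt_of_lt_of_le one_pos hx1
    rw [hestep i hi, Real.rpow_add hx0, mul_comm (x ^ e i)]
    refine mul_le_mul_of_nonneg_right ?_ (by positivity)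
    calc x ^ ((1:ℝ)/m) ≤ (Real.sqrt 2 ^ m) ^ ((1:ℝ)/m) :=
          Real.rpow_le_rpow hx0.le (hspecT x hx) (by positivity)
      _ = Real.sqrt 2 := by
          rw [← Real.rpow_natCast (Real.sqrt 2) m, ← Real.rpow_mul (Real.sqrt_nonneg 2),
            mul_one_div, div_self hm0, Real.rpow_one]
  -- facts about `S = √A`
  have hAsa : IsSelfAdjoint A := hA.isHermitian
  have hAspec : ∀ x ∈ spectrum ℝ A, (0:ℝ) ≤ x := by
    intro x hx
    rw [Matrix.IsHermitian.spectrum_real_eq_range_eigenvalues hA.isHermitian] at hx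
    obtain ⟨i, hi⟩ := hx
    have := hA.eigenvalues_pos i
    rw [hi] at this
    exact this.le
  have hSS : S * S = A := by
    rw [hSdef]
    show cfc Real.sqrt A * cfc Real.sqrt A = A
    rw [← cfc_mul Real.sqrt Real.sqrt A
      (contOn_of_finite Matrix.finite_real_spectrum)
      (contOn_of_finite Matrix.finite_real_spectrum)]
    calc cfc (fun x => Real.sqrt x * Real.sqrt x) A = cfc (fun x : ℝ => x) A :=
          cfc_congr (fun x hx => Real.mul_self_sqrt (hAspec x hx))
      _ = A := cfc_id' ℝ A hAsa
  have hdet : S.det ≠ 0 := by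
    have hd : S.det * S.det = A.det := by rw [← Matrix.det_mul, hSS]
    intro h0
    rw [h0, mul_zero] at hd
    exact hA.det_pos.ne' hd.symm
  have hSinv : S * S⁻¹ = 1 := Matrix.mul_nonsing_inv _ hdet.isUnit
  have hSinv' : S⁻¹ * S = 1 := Matrix.nonsing_inv_mul _ hdet.isUnit
  have hSsa : IsSelfAdjoint S := by rw [hSdef]; exact cfc_predicate Real.sqrt A
  have hSH : S.conjTranspose = S := by rw [← Matrix.star_eq_conjTranspose]; exact hSsa
  have hconj : ∀ X Y : Matrix (Fin n) (Fin n) ℂ,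
      loewnerLE X Y → loewnerLE (S * X * S) (S * Y * S) := by
    intro X Y hXY
    show (S * Y * S - S * X * S).PosSemidef
    have heq : S * Y * S - S * X * S = S * (Y - X) * S.conjTranspose := by
      rw [hSH, Matrix.mul_sub, Matrix.sub_mul]
    rw [heq]
    exact Matrix.PosSemidef.mul_mul_conjTranspose_same hXY S
  refine ⟨m + 1, Z, by omega, fun i _ _ => hZpd i, hZ1, hZk,
    fun i hi _ => ⟨hmono i hi, hstep2 i hi⟩, ?_, ?_, ?_⟩
  · rw [hZ1, Matrix.mul_one, hSS]
  · rw [hZk]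
    have heq : S * (S⁻¹ * B * S⁻¹) * S = S * (S⁻¹ * (B * (S⁻¹ * S))) := by
      simp only [Matrix.mul_assoc]
    rw [heq, hSinv', Matrix.mul_one, ← Matrix.mul_assoc, hSinv, Matrix.one_mul]
  · intro i hi _
    refine ⟨hconj _ _ (hmono i hi), ?_⟩
    show ((((Real.sqrt 2 : ℝ) : ℂ) • (S * Z i * S)) - S * Z (i + 1) * S).PosSemidef
    have h2 := hconj _ _ (hstep2 i hi)
    have heq : S * ((((Real.sqrt 2 : ℝ) : ℂ)) • Z i) * S
        = ((Real.sqrt 2 : ℝ) : ℂ) • (S * Z i * S) := by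
      rw [mul_smul_comm, smul_mul_assoc]
    show ((((Real.sqrt 2 : ℝ) : ℂ) • (S * Z i * S)) - S * Z (i + 1) * S).PosSemidef
    rwa [heq] at h2
end

section
/- If P and Q are orthogonal projections on a finite-dimensional Hilbert space with P ∧ Q = 0 (intersection of ranges is {0}), then the parallel sum satisfies (λP) : Q = 0 for every λ > 0, where X : Y = (X^{-1} + Y^{-1})^{-1} is extended to singular operators by X : Y = lim_{ε→0⁺} ((X+εI)^{-1} + (Y+εI)^{-1})^{-1}. -/
open scoped ComplexOrder

section Aux
open Matrix
variable {n : ℕ}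

-- scalar-smul inverse for matrices, unconditional in A
lemma matSmulInv (c : ℂ) (hc : c ≠ 0) (A : Matrix (Fin n) (Fin n) ℂ) :
    (c • A)⁻¹ = c⁻¹ • A⁻¹ := by
  rcases Nat.eq_zero_or_pos n with h0 | hn
  · subst h0; exact Subsingleton.elim _ _
  · rw [Matrix.inv_def, Matrix.inv_def, Matrix.det_smul, Matrix.adjugate_smul,
      Ring.inverse_eq_inv', mul_inv, smul_smul, smul_smul]
    congr 1
    simp only [Fintype.card_fin]
    have h' : c ^ n = c ^ (n - 1) * c := by rw [← pow_succ, Nat.sub_add_cancel hn]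
    have key : (c ^ n)⁻¹ * c ^ (n - 1) = c⁻¹ := by
      rw [h', mul_inv, mul_comm _ (c ^ (n - 1)), ← mul_assoc,
        mul_inv_cancel₀ (pow_ne_zero _ hc), one_mul]
    rw [mul_right_comm, key]

lemma proj_dot (P : Matrix (Fin n) (Fin n) ℂ) (hP : P.IsHermitian) (hPidem : P * P = P)
    (x : Fin n → ℂ) :
    star x ⬝ᵥ (P *ᵥ x) = star (P *ᵥ x) ⬝ᵥ (P *ᵥ x) := by
  conv_lhs => rw [← hPidem, ← Matrix.mulVec_mulVec, Matrix.dotProduct_mulVec]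
  congr 1
  rw [Matrix.star_mulVec, hP.eq]

lemma diff_dot (P : Matrix (Fin n) (Fin n) ℂ) (hP : P.IsHermitian) (hPidem : P * P = P)
    (x : Fin n → ℂ) :
    star x ⬝ᵥ x - star x ⬝ᵥ (P *ᵥ x) = star (x - P *ᵥ x) ⬝ᵥ (x - P *ᵥ x) := by
  have hy : star (P *ᵥ x) ⬝ᵥ x = star x ⬝ᵥ (P *ᵥ x) := by
    rw [Matrix.star_mulVec, hP.eq, ← Matrix.dotProduct_mulVec]
  rw [star_sub, sub_dotProduct, dotProduct_sub, dotProduct_sub, hy,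
    ← proj_dot P hP hPidem x]
  ring

lemma projRange (P : Matrix (Fin n) (Fin n) ℂ) {x : Fin n → ℂ} (hx : P *ᵥ x = x) :
    x ∈ LinearMap.range P.mulVecLin :=
  ⟨x, by simpa [Matrix.mulVecLin_apply] using hx⟩

lemma M_posdef (P Q : Matrix (Fin n) (Fin n) ℂ)
    (hP : P.IsHermitian) (hPidem : P * P = P)
    (hQ : Q.IsHermitian) (hQidem : Q * Q = Q)
    (hmeet : LinearMap.range P.mulVecLin ⊓ LinearMap.range Q.mulVecLin = ⊥) :
    ((2 : ℂ) • 1 - P - Q : Matrix (Fin n) (Fin n) ℂ).PosDef := by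
  rw [Matrix.posDef_iff_dotProduct_mulVec]
  constructor
  · refine Matrix.IsHermitian.sub (Matrix.IsHermitian.sub ?_ hP) hQ
    simp [Matrix.IsHermitian, Matrix.conjTranspose_smul]
  · intro x hx
    have key : star x ⬝ᵥ (((2 : ℂ) • 1 - P - Q) *ᵥ x)
        = star (x - P *ᵥ x) ⬝ᵥ (x - P *ᵥ x) + star (x - Q *ᵥ x) ⬝ᵥ (x - Q *ᵥ x) := by
      rw [← diff_dot P hP hPidem x, ← diff_dot Q hQ hQidem x]
      simp [Matrix.sub_mulVec, dotProduct_sub, Matrix.smul_mulVec,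
        Matrix.one_mulVec, dotProduct_smul]
      ring
    rw [key]
    rcases eq_or_ne (x - P *ᵥ x) 0 with h1 | h1
    · rcases eq_or_ne (x - Q *ᵥ x) 0 with h2 | h2
      · exfalso
        apply hx
        have hxP : P *ᵥ x = x := by linear_combination (norm := module) -h1
        have hxQ : Q *ᵥ x = x := by linear_combination (norm := module) -h2
        have : x ∈ LinearMap.range P.mulVecLin ⊓ LinearMap.range Q.mulVecLin :=
          ⟨projRange P hxP, projRange Q hxQ⟩
        simpa [hmeet] using this
      · have := dotProduct_star_self_nonneg (x - P *ᵥ x)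
        have h2' : (0 : ℂ) < star (x - Q *ᵥ x) ⬝ᵥ (x - Q *ᵥ x) :=
          lt_of_le_of_ne (dotProduct_star_self_nonneg _)
            (fun h => h2 (dotProduct_star_self_eq_zero.mp h.symm))
        exact add_pos_of_nonneg_of_pos this h2'
    · have h1' : (0 : ℂ) < star (x - P *ᵥ x) ⬝ᵥ (x - P *ᵥ x) :=
        lt_of_le_of_ne (dotProduct_star_self_nonneg _)
          (fun h => h1 (dotProduct_star_self_eq_zero.mp h.symm))
      exact add_pos_of_pos_of_nonneg h1' (dotProduct_star_self_nonneg _)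

lemma proj_inv (P : Matrix (Fin n) (Fin n) ℂ) (hPidem : P * P = P) (a e : ℂ)
    (ha : a + e ≠ 0) (he : e ≠ 0) :
    (a • P + e • 1)⁻¹ = (a + e)⁻¹ • P + e⁻¹ • (1 - P) := by
  apply Matrix.inv_eq_right_inv
  simp only [Matrix.add_mul, Matrix.mul_add, Matrix.smul_mul, Matrix.mul_smul, Matrix.mul_sub,
    Matrix.mul_one, Matrix.one_mul, hPidem, smul_smul, smul_sub]
  match_scalars <;> field_simp <;> ring

end Aux

theorem parallel_sum_proj_zero {n : ℕ} (P Q : Matrix (Fin n) (Fin n) ℂ)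
    (hP : P.IsHermitian) (hPidem : P * P = P)
    (hQ : Q.IsHermitian) (hQidem : Q * Q = Q)
    (hmeet : LinearMap.range P.mulVecLin ⊓ LinearMap.range Q.mulVecLin = ⊥)
    (l : ℝ) (hl : 0 < l) :
    Filter.Tendsto
      (fun ε : ℝ =>
        ((((l : ℂ) • P + (ε : ℂ) • 1)⁻¹ + (Q + (ε : ℂ) • 1)⁻¹)⁻¹ :
          Matrix (Fin n) (Fin n) ℂ))
      (nhdsWithin 0 (Set.Ioi 0)) (nhds 0) := by
  set M : Matrix (Fin n) (Fin n) ℂ := (2 : ℂ) • 1 - P - Q with hM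
  have hMpd := M_posdef P Q hP hPidem hQ hQidem hmeet
  set T : ℝ → Matrix (Fin n) (Fin n) ℂ :=
    fun ε => M + ((ε : ℂ) * ((l : ℂ) + (ε : ℂ))⁻¹) • P + ((ε : ℂ) * ((1 : ℂ) + (ε : ℂ))⁻¹) • Q
    with hT
  have key : ∀ ε ∈ Set.Ioi (0 : ℝ),
      (((l : ℂ) • P + (ε : ℂ) • 1)⁻¹ + (Q + (ε : ℂ) • 1)⁻¹)⁻¹ = (ε : ℂ) • (T ε)⁻¹ := by
    intro ε hε
    have hε' : (0 : ℝ) < ε := hε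
    have hε0 : (ε : ℂ) ≠ 0 := Complex.ofReal_ne_zero.mpr hε'.ne'
    have hle : (l : ℂ) + ε ≠ 0 := by
      have : ((l + ε : ℝ) : ℂ) ≠ 0 := Complex.ofReal_ne_zero.mpr (by linarith)
      simpa using this
    have h1e : (1 : ℂ) + ε ≠ 0 := by
      have : ((1 + ε : ℝ) : ℂ) ≠ 0 := Complex.ofReal_ne_zero.mpr (by linarith)
      simpa using this
    have hQ1 : Q + (ε : ℂ) • 1 = (1 : ℂ) • Q + (ε : ℂ) • 1 := by rw [one_smul]
    rw [proj_inv P hPidem l ε hle hε0, hQ1,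
      proj_inv Q hQidem 1 ε h1e hε0]
    have hsum : ((l : ℂ) + ε)⁻¹ • P + (ε : ℂ)⁻¹ • (1 - P) +
        (((1 : ℂ) + ε)⁻¹ • Q + (ε : ℂ)⁻¹ • (1 - Q)) = (ε : ℂ)⁻¹ • T ε := by
      rw [hT, hM]
      match_scalars <;> field_simp <;> (first | ring1 | exact Or.inl (by ring))
    rw [hsum, matSmulInv _ (inv_ne_zero hε0), inv_inv]
  have hdet : ContinuousAt Ring.inverse (M.det) := by
    have hu : IsUnit M.det := hMpd.det_pos.ne'.isUnit
    have := NormedRing.inverse_continuousAt hu.unit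
    simpa using this
  have hT0 : T 0 = M := by simp [hT]
  have hc1 : ContinuousAt (fun ε : ℝ => ((ε : ℂ) * ((l : ℂ) + (ε : ℂ))⁻¹)) 0 := by
    apply ContinuousAt.mul Complex.continuous_ofReal.continuousAt
    apply ContinuousAt.inv₀ (continuousAt_const.add Complex.continuous_ofReal.continuousAt)
    simpa using Complex.ofReal_ne_zero.mpr hl.ne'
  have hc2 : ContinuousAt (fun ε : ℝ => ((ε : ℂ) * ((1 : ℂ) + (ε : ℂ))⁻¹)) 0 := by
    apply ContinuousAt.mul Complex.continuous_ofReal.continuousAt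
    apply ContinuousAt.inv₀ (continuousAt_const.add Complex.continuous_ofReal.continuousAt)
    norm_num
  have hTc : ContinuousAt T 0 :=
    (continuousAt_const.add (hc1.smul continuousAt_const)).add (hc2.smul continuousAt_const)
  have hgc : ContinuousAt (fun A : Matrix (Fin n) (Fin n) ℂ => A⁻¹) (T 0) := by
    rw [hT0]; exact continuousAt_matrix_inv M hdet
  have hinv : Filter.Tendsto (fun ε => (T ε)⁻¹) (nhdsWithin 0 (Set.Ioi 0)) (nhds M⁻¹) := by
    have h3 : Filter.Tendsto (fun ε => (T ε)⁻¹) (nhds 0) (nhds ((T 0)⁻¹)) := (hgc.comp hTc).tendsto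
    rw [hT0] at h3
    exact h3.mono_left nhdsWithin_le_nhds
  have hsc : Filter.Tendsto (fun ε : ℝ => (ε : ℂ)) (nhdsWithin 0 (Set.Ioi 0)) (nhds 0) := by
    have h4 := (Complex.continuous_ofReal.continuousAt (x := (0 : ℝ))).tendsto
    simpa using h4.mono_left nhdsWithin_le_nhds
  have h2 := hsc.smul hinv
  rw [zero_smul] at h2
  exact Filter.Tendsto.congr'
    (Filter.eventuallyEq_of_mem self_mem_nhdsWithin fun ε hε => (key ε hε).symm) h2
end

section
/- For positive definite 2×2 real matrices, the harmonic mean 2(A^{-1}+B^{-1})^{-1} is less than or equal to the geometric mean A # B, which is less than or equal to the arithmetic mean (A+B)/2, in the Loewner order. -/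
open scoped ComplexOrder

namespace AuxCFC

open Matrix

variable {n : Type*} [Fintype n] [DecidableEq n] {M : Matrix n n ℝ}

lemma cfc_mul' (hM : M.IsHermitian) (f g : ℝ → ℝ) :
    hM.cfc f * hM.cfc g = hM.cfc (fun t => f t * g t) := by
  have key : ∀ a b c d e f' : Matrix n n ℝ, (a*b*c)*(d*e*f') = a*(b*(c*d)*e)*f' := by
    intros; simp only [mul_assoc]
  simp only [Matrix.IsHermitian.cfc, Unitary.conjStarAlgAut_apply, key, SetLike.coe_mem, Unitary.star_mul_self_of_mem,
    mul_one, diagonal_mul_diagonal]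
  congr 2

lemma cfc_congr' (hM : M.IsHermitian) {f g : ℝ → ℝ}
    (h : ∀ i, f (hM.eigenvalues i) = g (hM.eigenvalues i)) : hM.cfc f = hM.cfc g := by
  simp only [Matrix.IsHermitian.cfc, Unitary.conjStarAlgAut_apply]
  congr 2
  exact congrArg diagonal (funext fun i => by simp [h i])

lemma cfc_id' (hM : M.IsHermitian) : hM.cfc (fun t => t) = M := by
  conv_rhs => rw [hM.spectral_theorem]
  rfl

lemma cfc_one' (hM : M.IsHermitian) : hM.cfc (fun _ => 1) = 1 := by
  simp only [Matrix.IsHermitian.cfc, Unitary.conjStarAlgAut_apply]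
  have : (diagonal (RCLike.ofReal ∘ (fun _ : ℝ => (1:ℝ)) ∘ hM.eigenvalues) : Matrix n n ℝ) = 1 := by
    simp [Function.comp_def]
  rw [this, mul_one]
  exact Unitary.mul_star_self_of_mem (SetLike.coe_mem _)

lemma cfc_add' (hM : M.IsHermitian) (f g : ℝ → ℝ) :
    hM.cfc f + hM.cfc g = hM.cfc (fun t => f t + g t) := by
  simp only [Matrix.IsHermitian.cfc, Unitary.conjStarAlgAut_apply, ← add_mul, ← mul_add, diagonal_add]
  congr 2

lemma cfc_smul' (hM : M.IsHermitian) (r : ℝ) (f : ℝ → ℝ) :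
    r • hM.cfc f = hM.cfc (fun t => r * f t) := by
  simp only [Matrix.IsHermitian.cfc, Unitary.conjStarAlgAut_apply]
  rw [← smul_mul_assoc, ← mul_smul_comm, ← Matrix.diagonal_smul]
  congr 2

lemma cfc_sub' (hM : M.IsHermitian) (f g : ℝ → ℝ) :
    hM.cfc f - hM.cfc g = hM.cfc (fun t => f t - g t) := by
  simp only [Matrix.IsHermitian.cfc, Unitary.conjStarAlgAut_apply, ← sub_mul, ← mul_sub, diagonal_sub]
  congr 2

lemma cfc_posSemidef' (hM : M.IsHermitian) {f : ℝ → ℝ}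
    (hf : ∀ i, 0 ≤ f (hM.eigenvalues i)) : (hM.cfc f).PosSemidef := by
  have hD : (diagonal (RCLike.ofReal ∘ f ∘ hM.eigenvalues) : Matrix n n ℝ).PosSemidef :=
    PosSemidef.diagonal (fun i => by simpa using hf i)
  have := hD.mul_mul_conjTranspose_same (hM.eigenvectorUnitary : Matrix n n ℝ)
  rwa [← star_eq_conjTranspose] at this

lemma posDef_conj {B : Matrix n n ℝ} (hB : B.PosDef) {N : Matrix n n ℝ} (hN : IsUnit N.det) :
    (Nᴴ * B * N).PosDef := by
  refine PosDef.of_dotProduct_mulVec_pos (Matrix.isHermitian_conjTranspose_mul_mul N hB.1) fun x hx => ?_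
  have hx' : N *ᵥ x ≠ 0 := by
    intro h
    apply hx
    have := congrArg (fun v => N⁻¹ *ᵥ v) h
    simpa [Matrix.mulVec_mulVec, Matrix.nonsing_inv_mul _ hN] using this
  simpa only [star_mulVec, dotProduct_mulVec, vecMul_vecMul] using hB.dotProduct_mulVec_pos hx'

lemma cfc_posDef' (hM : M.IsHermitian) {f : ℝ → ℝ}
    (hf : ∀ i, 0 < f (hM.eigenvalues i)) : (hM.cfc f).PosDef := by
  have hD : (diagonal (RCLike.ofReal ∘ f ∘ hM.eigenvalues) : Matrix n n ℝ).PosDef :=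
    Matrix.posDef_diagonal_iff.mpr (fun i => by simpa using hf i)
  set U : Matrix n n ℝ := (hM.eigenvectorUnitary : Matrix n n ℝ) with hU
  have hUdet : IsUnit (star U).det := by
    have h1 : star U * U = 1 := Unitary.star_mul_self_of_mem (SetLike.coe_mem _)
    exact IsUnit.of_mul_eq_one _ (by rw [← Matrix.det_mul, h1, Matrix.det_one])
  have := posDef_conj hD hUdet
  rwa [star_eq_conjTranspose, conjTranspose_conjTranspose] at this

lemma cfc_inv' (hM : M.IsHermitian) {f : ℝ → ℝ}
    (hf : ∀ i, f (hM.eigenvalues i) ≠ 0) :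
    (hM.cfc f)⁻¹ = hM.cfc (fun t => (f t)⁻¹) := by
  apply Matrix.inv_eq_right_inv
  rw [cfc_mul']
  rw [cfc_congr' hM (g := fun _ => 1) (fun i => mul_inv_cancel₀ (hf i))]
  exact cfc_one' hM

end AuxCFC

open Matrix AuxCFC in
theorem harmonic_le_geom_le_arith (A B : Matrix (Fin 2) (Fin 2) ℝ)
    (hA : A.PosDef) (hB : B.PosDef) :
    loewnerLE ((2 : ℝ) • (A⁻¹ + B⁻¹)⁻¹) (geomMean A B) ∧
      loewnerLE (geomMean A B) ((1 / 2 : ℝ) • (A + B)) := by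
  classical
  have hSdef : matSqrt A = hA.1.cfc Real.sqrt := hA.1.cfc_eq _
  set S := hA.1.cfc Real.sqrt with hS_def
  have hSpd : S.PosDef := cfc_posDef' hA.1 (fun i => Real.sqrt_pos.mpr (hA.eigenvalues_pos i))
  have hSH : S.IsHermitian := hSpd.1
  have hSdet : IsUnit S.det := hSpd.det_pos.ne'.isUnit
  have hSS : S * S = A := by
    rw [cfc_mul' hA.1,
      cfc_congr' hA.1 (g := fun t => t)
        (fun i => Real.mul_self_sqrt (hA.eigenvalues_pos i).le),
      cfc_id']
  have hSinv : S * S⁻¹ = 1 := Matrix.mul_nonsing_inv _ hSdet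
  have hSinv' : S⁻¹ * S = 1 := Matrix.nonsing_inv_mul _ hSdet
  set C := S⁻¹ * B * S⁻¹ with hC_def
  have hCpd : C.PosDef := by
    have hNdet : IsUnit (S⁻¹).det := (Matrix.isUnit_nonsing_inv_det _ hSdet)
    have h := posDef_conj hB hNdet
    rwa [hSH.inv.eq] at h
  set T := hCpd.1.cfc Real.sqrt with hT_def
  have hGeom : geomMean A B = S * T * S := by
    rw [geomMean, hSdef, show matSqrt (S⁻¹ * B * S⁻¹) = hCpd.1.cfc Real.sqrt from hCpd.1.cfc_eq _]
  have hTT : T * T = C := by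
    rw [hT_def, cfc_mul' hCpd.1,
      cfc_congr' hCpd.1 (g := fun t => t)
        (fun i => Real.mul_self_sqrt (hCpd.eigenvalues_pos i).le),
      cfc_id']
  have hBC : S * C * S = B := by
    rw [hC_def, show S * (S⁻¹ * B * S⁻¹) * S = (S * S⁻¹) * B * (S⁻¹ * S) by
      simp only [mul_assoc], hSinv, hSinv', one_mul, mul_one]
  constructor
  · -- harmonic ≤ geometric
    have hAinv : A⁻¹ = S⁻¹ * S⁻¹ := by rw [← hSS, Matrix.mul_inv_rev]
    have hBinv : B⁻¹ = S⁻¹ * C⁻¹ * S⁻¹ := by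
      rw [← hBC, Matrix.mul_inv_rev, Matrix.mul_inv_rev, mul_assoc]
    have hsum : A⁻¹ + B⁻¹ = S⁻¹ * (1 + C⁻¹) * S⁻¹ := by
      rw [hAinv, hBinv]
      simp only [Matrix.mul_add, Matrix.add_mul, mul_one, one_mul]
    have hSinvinv : S⁻¹⁻¹ = S := Matrix.nonsing_inv_nonsing_inv _ hSdet
    have hHM : (A⁻¹ + B⁻¹)⁻¹ = S * (1 + C⁻¹)⁻¹ * S := by
      rw [hsum, Matrix.mul_inv_rev, Matrix.mul_inv_rev, hSinvinv, mul_assoc]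
    have hCev : ∀ i, 0 < hCpd.1.eigenvalues i := hCpd.eigenvalues_pos
    have hCinv : C⁻¹ = hCpd.1.cfc (fun t => t⁻¹) := by
      conv_lhs => rw [← cfc_id' hCpd.1]
      exact cfc_inv' hCpd.1 (fun i => (hCev i).ne')
    have h1C : (1 : Matrix (Fin 2) (Fin 2) ℝ) + C⁻¹ = hCpd.1.cfc (fun t => 1 + t⁻¹) := by
      rw [hCinv, ← cfc_one' hCpd.1, cfc_add' hCpd.1]
    have hW : (1 + C⁻¹)⁻¹ = hCpd.1.cfc (fun t => (1 + t⁻¹)⁻¹) := by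
      rw [h1C]
      refine cfc_inv' hCpd.1 (fun i => ?_)
      have h := hCev i
      show (1 : ℝ) + (hCpd.1.eigenvalues i)⁻¹ ≠ 0
      positivity
    rw [loewnerLE, hGeom, hHM, hW]
    have hcomb : S * T * S - (2:ℝ) • (S * hCpd.1.cfc (fun t => (1 + t⁻¹)⁻¹) * S)
        = S * (T - (2:ℝ) • hCpd.1.cfc (fun t => (1 + t⁻¹)⁻¹)) * S := by
      simp only [Matrix.mul_sub, Matrix.sub_mul, mul_smul_comm, smul_mul_assoc]
    rw [hcomb]
    have hMid : (T - (2:ℝ) • hCpd.1.cfc (fun t => (1 + t⁻¹)⁻¹)).PosSemidef := by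
      rw [hT_def, cfc_smul' hCpd.1, cfc_sub' hCpd.1]
      apply cfc_posSemidef' hCpd.1
      intro i
      set t := hCpd.1.eigenvalues i with ht
      have htpos : 0 < t := hCev i
      have hs : Real.sqrt t * Real.sqrt t = t := Real.mul_self_sqrt htpos.le
      have hs0 : 0 ≤ Real.sqrt t := Real.sqrt_nonneg t
      have h1 : (1 + t⁻¹)⁻¹ = t / (t + 1) := by
        rw [show (1:ℝ) + t⁻¹ = (t + 1) / t by field_simp]
        rw [inv_div]
      rw [h1, sub_nonneg, show (2:ℝ) * (t / (t + 1)) = 2 * t / (t + 1) by ring,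
        div_le_iff₀ (by linarith : (0:ℝ) < t + 1)]
      nlinarith [mul_nonneg hs0 (sq_nonneg (Real.sqrt t - 1))]
    have := hMid.mul_mul_conjTranspose_same S
    rwa [hSH.eq] at this
  · -- geometric ≤ arithmetic
    rw [loewnerLE, hGeom]
    have hcomb : (1/2 : ℝ) • (A + B) - S * T * S
        = S * ((1/2 : ℝ) • (1 + C) - T) * S := by
      rw [show S * ((1/2 : ℝ) • (1 + C) - T) * S
          = (1/2 : ℝ) • (S * S + S * C * S) - S * T * S by
        simp only [Matrix.mul_sub, Matrix.sub_mul, mul_smul_comm, smul_mul_assoc,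
          Matrix.mul_add, Matrix.add_mul, mul_one, one_mul], hSS, hBC]
    rw [hcomb]
    have hMid : ((1/2 : ℝ) • (1 + C) - T).PosSemidef := by
      have h1C : (1 : Matrix (Fin 2) (Fin 2) ℝ) + C = hCpd.1.cfc (fun t => 1 + t) := by
        conv_lhs => rw [← cfc_id' hCpd.1, ← cfc_one' hCpd.1]
        rw [cfc_add' hCpd.1]
      rw [hT_def, h1C, cfc_smul' hCpd.1, cfc_sub' hCpd.1]
      apply cfc_posSemidef' hCpd.1
      intro i
      set t := hCpd.1.eigenvalues i with ht
      have htpos : 0 < t := hCpd.eigenvalues_pos i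
      have hs : Real.sqrt t * Real.sqrt t = t := Real.mul_self_sqrt htpos.le
      nlinarith [sq_nonneg (Real.sqrt t - 1), Real.sqrt_nonneg t]
    have := hMid.mul_mul_conjTranspose_same S
    rwa [hSH.eq] at this
end
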